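/- Suppose a probabilistic assignment rule φ is SD-Pareto-efficient, SD-individually rational, and SD-top-strategy-proof with deterministic endowments (agent i owns x_i). Let C = (i_1,...,i_k) be a cycle in the top-choice graph at profile P_N (agent i_j top-ranks x_{i_{j+1}}, indices mod k). Then φ assigns each agent i_j in C her top-ranked object x_{i_{j+1}} with probability 1 at P_N. -/

import Mathlib

open Finset

/-- A strict preference over the `n` objects, given by its rank function:
`P x ≤ P y` means `x` is weakly preferred to `y` (rank `0` is best). -/
abbrev Pref (n : ℕ) := Equiv.Perm (Fin n)

/-- The top-ranked object of a preference. -/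
def topOf {n : ℕ} [NeZero n] (P : Pref n) : Fin n := P.symm 0

/-- Upper contour set of object `x` at preference `P`. -/
def UC {n : ℕ} (P : Pref n) (x : Fin n) : Finset (Fin n) :=
  Finset.univ.filter fun y => P y ≤ P x

/-- First-order stochastic dominance of lottery `l` over lottery `m` w.r.t. `P`. -/
def SDdom {n : ℕ} (P : Pref n) (l m : Fin n → ℝ) : Prop :=
  ∀ x, ∑ y ∈ UC P x, m y ≤ ∑ y ∈ UC P x, l y

/-- Strict stochastic dominance. -/
def SDstrict {n : ℕ} (P : Pref n) (l m : Fin n → ℝ) : Prop :=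
  SDdom P l m ∧ ∃ x, ∑ y ∈ UC P x, m y < ∑ y ∈ UC P x, l y

/-- Point mass at `x`. -/
def delta {n : ℕ} (x : Fin n) : Fin n → ℝ := fun y => if y = x then 1 else 0

/-- A bistochastic (doubly stochastic) matrix: a probabilistic assignment.
Row `i` is agent `i`'s lottery over objects. -/
def Bistochastic {n : ℕ} (A : Matrix (Fin n) (Fin n) ℝ) : Prop :=
  (∀ i j, 0 ≤ A i j) ∧ (∀ i, ∑ j, A i j = 1) ∧ (∀ j, ∑ i, A i j = 1)

/-- `B` SD-Pareto-dominates `A` at profile `P`. -/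
def ParetoDom {n : ℕ} (P : Fin n → Pref n) (B A : Matrix (Fin n) (Fin n) ℝ) : Prop :=
  (∀ i, SDdom (P i) (B i) (A i)) ∧ ∃ i, SDstrict (P i) (B i) (A i)

/-- `A` is SD-Pareto-efficient at `P`: no bistochastic matrix dominates it. -/
def SDEffAt {n : ℕ} (P : Fin n → Pref n) (A : Matrix (Fin n) (Fin n) ℝ) : Prop :=
  ¬ ∃ B, Bistochastic B ∧ ParetoDom P B A

/-- `A` is SD-individually rational at `P`: agent `i` (endowed with object `i`)
gets a lottery stochastically dominating the point mass at her endowment. -/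
def SDIRAt {n : ℕ} (P : Fin n → Pref n) (A : Matrix (Fin n) (Fin n) ℝ) : Prop :=
  ∀ i, SDdom (P i) (A i) (delta i)


section Aux

variable {n : ℕ} [NeZero n]

/-- A preference ranking `a` first and (if `b ≠ a`) `b` second. -/
def mkPref (a b : Fin n) : Pref n :=
  if _ : b = a then Equiv.swap a 0
  else (Equiv.swap a 0).trans (Equiv.swap (Equiv.swap a 0 b) 1)

lemma fin_one_ne_zero {a b : Fin n} (h : b ≠ a) : (1 : Fin n) ≠ 0 := by
  haveI : Nontrivial (Fin n) := ⟨b, a, h⟩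
  have h2 : 1 < n := by simpa using Fintype.one_lt_card_iff_nontrivial.2 this
  intro h0
  have := congrArg Fin.val h0
  rw [Fin.val_one', Nat.mod_eq_of_lt h2] at this
  simp at this

lemma mkPref_a (a b : Fin n) : mkPref a b a = 0 := by
  unfold mkPref
  split_ifs with h
  · simp
  · have hb0 : Equiv.swap a 0 b ≠ 0 := by
      intro h0
      exact h ((Equiv.swap a 0).injective (by simpa using h0))
    simp only [Equiv.trans_apply, Equiv.swap_apply_left]
    exact Equiv.swap_apply_of_ne_of_ne (Ne.symm hb0) (Ne.symm (fin_one_ne_zero h))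

lemma mkPref_b {a b : Fin n} (h : b ≠ a) : mkPref a b b = 1 := by
  unfold mkPref
  rw [dif_neg h]
  simp [Equiv.trans_apply]

lemma mkPref_top (a b : Fin n) : topOf (mkPref a b) = a := by
  rw [topOf, Equiv.symm_apply_eq, mkPref_a]

lemma top_mem_UC (P : Pref n) (x : Fin n) : topOf P ∈ UC P x := by
  simp only [UC, mem_filter, mem_univ, true_and, topOf, Equiv.apply_symm_apply]
  exact Fin.zero_le _

lemma UC_top (P : Pref n) : UC P (topOf P) = {topOf P} := by
  ext y
  simp only [UC, mem_filter, mem_univ, true_and, topOf, Equiv.apply_symm_apply,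
    mem_singleton]
  constructor
  · intro hy
    have : P y = 0 := le_antisymm hy (Fin.zero_le _)
    rw [Equiv.eq_symm_apply]; exact this
  · rintro rfl; simp

lemma UC_mkPref_b {a b : Fin n} (h : b ≠ a) : UC (mkPref a b) b = {a, b} := by
  have h1 : (1 : Fin n).val = 1 := by
    haveI : Nontrivial (Fin n) := ⟨b, a, h⟩
    have h2 : 1 < n := by simpa using Fintype.one_lt_card_iff_nontrivial.2 this
    exact Fin.val_one' n |>.trans (Nat.mod_eq_of_lt h2)
  ext y
  simp only [UC, mem_filter, mem_univ, true_and, mem_insert, mem_singleton,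
    mkPref_b h]
  constructor
  · intro hy
    have : (mkPref a b y).val ≤ 1 := by rw [← h1]; exact hy
    rcases Nat.le_one_iff_eq_zero_or_eq_one.1 this with h0 | h0
    · left
      have : mkPref a b y = 0 := by
        apply Fin.ext; simpa using h0
      have := this.trans (mkPref_a a b).symm
      exact (mkPref a b).injective this
    · right
      have : mkPref a b y = 1 := by apply Fin.ext; rw [h0, h1]
      exact (mkPref a b).injective (this.trans (mkPref_b h).symm)
  · rintro (rfl | rfl)
    · rw [mkPref_a]; exact Fin.zero_le _
    · exact (mkPref_b h).le

lemma delta_sum {s : Finset (Fin n)} {x : Fin n} :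
    ∑ y ∈ s, delta x y = if x ∈ s then 1 else 0 := by
  simp [delta, sum_ite_eq']

lemma bi_row_le {A : Matrix (Fin n) (Fin n) ℝ} (hA : Bistochastic A) (r : Fin n)
    (t : Finset (Fin n)) : ∑ s ∈ t, A r s ≤ 1 := by
  rw [← hA.2.1 r]
  exact sum_le_sum_of_subset_of_nonneg (subset_univ t) fun j _ _ => hA.1 r j

lemma bi_col_le {A : Matrix (Fin n) (Fin n) ℝ} (hA : Bistochastic A) (s : Fin n)
    (t : Finset (Fin n)) : ∑ r ∈ t, A r s ≤ 1 := by
  rw [← hA.2.2 s]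
  exact sum_le_sum_of_subset_of_nonneg (subset_univ t) fun j _ _ => hA.1 j s

lemma bi_entry_le {A : Matrix (Fin n) (Fin n) ℝ} (hA : Bistochastic A)
    (r s : Fin n) : A r s ≤ 1 := by
  simpa using bi_row_le hA r {s}

lemma sd_delta_pair {l : Fin n → ℝ} {a b : Fin n} (hba : b ≠ a)
    (h : SDdom (mkPref a b) l (delta b)) : 1 ≤ l a + l b := by
  have hx := h b
  rw [UC_mkPref_b hba, sum_pair (Ne.symm hba), sum_pair (Ne.symm hba)] at hx
  have : delta b a + delta b b = 1 := by simp [delta, Ne.symm hba]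
  linarith

end Aux
section Prof

variable {n k : ℕ} [NeZero n] [NeZero k]

/-- The misreport of cycle agent `j`: top `i (j+1)`, second her endowment `i j`. -/
def Qpref (i : ZMod k → Fin n) (j : ZMod k) : Pref n := mkPref (i (j + 1)) (i j)

/-- Hybrid profile: agents `i j` for `j ∈ S` report `Qpref i j`, others are truthful. -/
noncomputable def PSprof (P : Fin n → Pref n) (i : ZMod k → Fin n)
    (S : Finset (ZMod k)) : Fin n → Pref n := fun a =>
  if h : ∃ j ∈ S, i j = a then Qpref i h.choose else P a

variable {P : Fin n → Pref n} {i : ZMod k → Fin n}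

lemma PSprof_in (hinj : Function.Injective i) {S : Finset (ZMod k)} {j : ZMod k}
    (hj : j ∈ S) : PSprof P i S (i j) = Qpref i j := by
  have h : ∃ j' ∈ S, i j' = i j := ⟨j, hj, rfl⟩
  rw [PSprof, dif_pos h]
  exact congrArg _ (hinj h.choose_spec.2)

lemma PSprof_out {S : Finset (ZMod k)} {a : Fin n}
    (ha : ∀ j ∈ S, i j ≠ a) : PSprof P i S a = P a := by
  rw [PSprof, dif_neg]
  rintro ⟨j, hj, rfl⟩
  exact ha j hj rfl

lemma PSprof_insert (hinj : Function.Injective i) (S : Finset (ZMod k)) (j : ZMod k) :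
    Function.update (PSprof P i S) (i j) (Qpref i j) = PSprof P i (insert j S) := by
  funext a
  by_cases haj : a = i j
  · subst haj
    rw [Function.update_self, PSprof_in hinj (mem_insert_self j S)]
  · rw [Function.update_of_ne haj]
    by_cases hS : ∃ j' ∈ S, i j' = a
    · obtain ⟨j', hj', rfl⟩ := hS
      rw [PSprof_in hinj hj', PSprof_in hinj (mem_insert_of_mem hj')]
    · rw [PSprof_out (fun j' hj' h => hS ⟨j', hj', h⟩), PSprof_out]
      rintro j'' hj'' rfl
      rcases mem_insert.1 hj'' with rfl | hj''
      · exact haj rfl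
      · exact hS ⟨j'', hj'', rfl⟩

lemma PSprof_top (hinj : Function.Injective i)
    (hcyc : ∀ j : ZMod k, topOf (P (i j)) = i (j + 1)) (S : Finset (ZMod k))
    (j : ZMod k) : topOf (PSprof P i S (i j)) = i (j + 1) := by
  by_cases hj : j ∈ S
  · rw [PSprof_in hinj hj]; exact mkPref_top _ _
  · rw [PSprof_out (fun j' hj' h => hj (by rwa [← hinj h]))]
    exact hcyc j

lemma PSprof_empty : PSprof P i ∅ = P :=
  funext fun a => PSprof_out (by simp)

end Prof
section Main

variable {n k : ℕ} [NeZero n] [NeZero k]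
  {φ : (Fin n → Pref n) → Matrix (Fin n) (Fin n) ℝ}
  {P : Fin n → Pref n} {i : ZMod k → Fin n}

lemma cycle_ne (hinj : Function.Injective i) (h1 : (1 : ZMod k) ≠ 0) (j : ZMod k) :
    i (j + 1) ≠ i j := by
  intro h
  apply h1
  have := hinj h
  linear_combination this

lemma base (hφ : ∀ P, Bistochastic (φ P)) (hEff : ∀ P, SDEffAt P (φ P))
    (hIR : ∀ P, SDIRAt P (φ P)) (hinj : Function.Injective i)
    (h1 : (1 : ZMod k) ≠ 0) :
    ∀ j, φ (PSprof P i Finset.univ) (i j) (i (j + 1)) = 1 := by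
  classical
  set R := PSprof P i (Finset.univ : Finset (ZMod k)) with hRdef
  set A := φ R with hAdef
  have hAb : Bistochastic A := hφ R
  have hRQ : ∀ j, R (i j) = Qpref i j := fun j => PSprof_in hinj (mem_univ j)
  have hne : ∀ j : ZMod k, i (j + 1) ≠ i j := cycle_ne hinj h1
  have f1 : ∀ j : ZMod k, A (i j) (i j) + A (i j) (i (j + 1)) = 1 := by
    intro j
    have hge : 1 ≤ A (i j) (i (j + 1)) + A (i j) (i j) := by
      have h := hIR R (i j)
      rw [hRQ j] at h
      exact sd_delta_pair (Ne.symm (hne j)) h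
    have hle : A (i j) (i j) + A (i j) (i (j + 1)) ≤ 1 := by
      have h := bi_row_le hAb (i j) {i j, i (j + 1)}
      rwa [sum_pair (Ne.symm (hne j))] at h
    linarith
  have f2 : ∀ (j : ZMod k) (s : Fin n), s ≠ i j → s ≠ i (j + 1) → A (i j) s = 0 := by
    intro j s hs1 hs2
    have hsub : ∑ y ∈ insert s {i j, i (j + 1)}, A (i j) y ≤ 1 :=
      bi_row_le hAb (i j) _
    rw [sum_insert (by simp [hs1, hs2]), sum_pair (Ne.symm (hne j)), f1 j] at hsub
    have := hAb.1 (i j) s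
    linarith
  have f3 : ∀ j : ZMod k, A (i (j + 1)) (i (j + 1)) ≤ A (i j) (i j) := by
    intro j
    have hcolp : A (i j) (i (j + 1)) + A (i (j + 1)) (i (j + 1)) ≤ 1 := by
      have h := bi_col_le hAb (i (j + 1)) {i j, i (j + 1)}
      rwa [sum_pair (Ne.symm (hne j))] at h
    have := f1 j
    linarith
  set c := A (i 0) (i 0) with hcdef
  have f4 : ∀ j : ZMod k, A (i j) (i j) = c := by
    have mono : ∀ (m : ℕ) (j : ZMod k),
        A (i (j + (m : ZMod k))) (i (j + (m : ZMod k))) ≤ A (i j) (i j) := by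
      intro m
      induction m with
      | zero => intro j; simp
      | succ m ih =>
        intro j
        have hc1 : ((m + 1 : ℕ) : ZMod k) = (m : ZMod k) + 1 := by push_cast; ring
        rw [hc1, ← add_assoc]
        exact (f3 (j + (m : ZMod k))).trans (ih j)
    intro j
    have hv : ∀ x : ZMod k, ((x.val : ℕ) : ZMod k) = x := ZMod.natCast_rightInverse
    have hle1 : A (i j) (i j) ≤ c := by
      have h := mono j.val 0
      rwa [hv j, zero_add] at h
    have hle2 : c ≤ A (i j) (i j) := by
      have h := mono (0 - j).val j
      have e : j + (0 - j) = 0 := by ring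
      rwa [hv (0 - j), e] at h
    linarith
  have hAcol : ∀ m : ZMod k, ∑ j : ZMod k, A (i j) (i m) = 1 := by
    intro m
    have hm1 : m - 1 ≠ m := by
      intro h; apply h1; linear_combination -h
    have hz : ∀ j ∈ (Finset.univ : Finset (ZMod k)),
        j ∉ ({m, m - 1} : Finset (ZMod k)) → A (i j) (i m) = 0 := by
      intro j _ hj
      simp only [mem_insert, mem_singleton] at hj
      push_neg at hj
      refine f2 j (i m) (fun h => hj.1 (hinj h).symm) (fun h => hj.2 ?_)
      rw [eq_sub_iff_add_eq]
      exact (hinj h).symm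
    rw [← Finset.sum_subset (subset_univ ({m, m - 1} : Finset (ZMod k))) hz,
      sum_pair (Ne.symm hm1)]
    have h5 : A (i (m - 1)) (i m) = 1 - c := by
      have h := f1 (m - 1)
      rw [sub_add_cancel, f4 (m - 1)] at h
      linarith
    rw [f4 m, h5]; ring
  have hc0 : c = 0 := by
    by_contra hcne
    have hcpos : 0 < c := lt_of_le_of_ne (hAb.1 (i 0) (i 0)) (Ne.symm hcne)
    set B : Matrix (Fin n) (Fin n) ℝ := fun r s =>
      if h : ∃ j, i j = r then delta (i (h.choose + 1)) s else A r s with hBdef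
    have hBin : ∀ (j : ZMod k) (s : Fin n), B (i j) s = delta (i (j + 1)) s := by
      intro j s
      show (if h : ∃ j', i j' = i j then delta (i (h.choose + 1)) s else A (i j) s) = _
      rw [dif_pos ⟨j, rfl⟩]
      have hch : (⟨j, rfl⟩ : ∃ j', i j' = i j).choose = j :=
        hinj (Exists.choose_spec (⟨j, rfl⟩ : ∃ j', i j' = i j))
      rw [hch]
    have hBout : ∀ r : Fin n, (∀ j, i j ≠ r) → ∀ s, B r s = A r s := by
      intro r hr s
      show (if h : ∃ j', i j' = r then delta (i (h.choose + 1)) s else A r s) = _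
      rw [dif_neg]
      rintro ⟨j, hj⟩
      exact hr j hj
    have hBcol : ∀ s, ∑ r, B r s = 1 := by
      intro s
      have h6 : ∑ r, (B r s - A r s)
          = ∑ j : ZMod k, (delta (i (j + 1)) s - A (i j) s) := by
        have h7 : ∑ r, (B r s - A r s)
            = ∑ r ∈ Finset.univ.image i, (B r s - A r s) := by
          symm
          apply Finset.sum_subset (subset_univ _)
          intro r _ hr
          rw [hBout r (fun j hj => hr (mem_image.2 ⟨j, mem_univ j, hj⟩)), sub_self]
        rw [h7, Finset.sum_image (fun a _ b _ h => hinj h)]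
        exact Finset.sum_congr rfl fun j _ => by rw [hBin j]
      have h9 : ∑ j : ZMod k, delta (i (j + 1)) s = ∑ j : ZMod k, delta (i j) s :=
        Equiv.sum_comp (Equiv.addRight (1 : ZMod k)) (fun j => delta (i j) s)
      have h8 : ∑ j : ZMod k, delta (i (j + 1)) s = ∑ j : ZMod k, A (i j) s := by
        by_cases hs : ∃ m, i m = s
        · obtain ⟨m, rfl⟩ := hs
          rw [h9, hAcol m]
          have h10 : ∀ j : ZMod k, delta (i j) (i m) = if j = m then (1 : ℝ) else 0 := by
            intro j
            simp only [delta]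
            by_cases hjm : j = m
            · subst hjm; simp
            · rw [if_neg (fun h => hjm (hinj h).symm), if_neg hjm]
          rw [Finset.sum_congr rfl fun j _ => h10 j, Finset.sum_ite_eq']
          simp
        · push_neg at hs
          have hz1 : ∑ j : ZMod k, delta (i j) s = 0 :=
            Finset.sum_eq_zero fun j _ => by simp [delta, Ne.symm (hs j)]
          have hz2 : ∑ j : ZMod k, A (i j) s = 0 :=
            Finset.sum_eq_zero fun j _ => f2 j s (Ne.symm (hs j)) (Ne.symm (hs (j + 1)))
          rw [h9, hz1, hz2]
      have h11 : ∑ r, (B r s - A r s) = 0 := by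
        rw [h6, Finset.sum_sub_distrib, h8, sub_self]
      rw [Finset.sum_sub_distrib] at h11
      have := hAb.2.2 s
      linarith
    have hBb : Bistochastic B := by
      refine ⟨?_, ?_, hBcol⟩
      · intro r s
        by_cases hr : ∃ j, i j = r
        · obtain ⟨j, rfl⟩ := hr
          rw [hBin j]
          unfold delta
          split <;> norm_num
        · push_neg at hr
          rw [hBout r hr]
          exact hAb.1 r s
      · intro r
        by_cases hr : ∃ j, i j = r
        · obtain ⟨j, rfl⟩ := hr
          rw [Finset.sum_congr rfl fun s _ => hBin j s, delta_sum]
          simp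
        · push_neg at hr
          rw [Finset.sum_congr rfl fun s _ => hBout r hr s]
          exact hAb.2.1 r
    have hQtop : ∀ j : ZMod k, topOf (Qpref i j) = i (j + 1) := fun j => mkPref_top _ _
    have hdom : ∀ r, SDdom (R r) (B r) (A r) := by
      intro r
      by_cases hr : ∃ j, i j = r
      · obtain ⟨j, rfl⟩ := hr
        intro x
        have htop : i (j + 1) ∈ UC (R (i j)) x := by
          rw [hRQ j, ← hQtop j]
          exact top_mem_UC _ x
        have hBsum : ∑ y ∈ UC (R (i j)) x, B (i j) y = 1 := by
          rw [Finset.sum_congr rfl fun y _ => hBin j y, delta_sum, if_pos htop]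
        rw [hBsum]
        exact bi_row_le hAb (i j) _
      · push_neg at hr
        intro x
        rw [Finset.sum_congr rfl fun y _ => hBout r hr y]
    have hstrict : SDstrict (R (i 0)) (B (i 0)) (A (i 0)) := by
      refine ⟨hdom (i 0), ⟨i (0 + 1), ?_⟩⟩
      have hUC : UC (R (i 0)) (i (0 + 1)) = {i (0 + 1)} := by
        rw [hRQ 0, ← hQtop 0, UC_top, hQtop 0]
      rw [hUC, Finset.sum_singleton, Finset.sum_singleton, hBin 0]
      have hA01 : A (i 0) (i (0 + 1)) = 1 - c := by
        have := f1 0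
        rw [f4 0] at this
        linarith
      rw [hA01]
      simp only [delta]
      norm_num
      linarith
    exact hEff R ⟨B, hBb, hdom, ⟨i 0, hstrict⟩⟩
  intro j
  have h := f1 j
  rw [f4 j, hc0] at h
  linarith

lemma key (hφ : ∀ P, Bistochastic (φ P)) (hEff : ∀ P, SDEffAt P (φ P))
    (hIR : ∀ P, SDIRAt P (φ P))
    (hSP : ∀ (P : Fin n → Pref n) (a : Fin n) (P' : Pref n),
      φ (Function.update P a P') a (topOf (P a)) ≤ φ P a (topOf (P a)))
    (hinj : Function.Injective i) (hcyc : ∀ j : ZMod k, topOf (P (i j)) = i (j + 1))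
    (h1 : (1 : ZMod k) ≠ 0) :
    ∀ (t : ℕ) (S : Finset (ZMod k)), Sᶜ.card ≤ t →
      ∀ j, φ (PSprof P i S) (i j) (i (j + 1)) = 1 := by
  intro t
  induction t with
  | zero =>
    intro S hS
    have hU : S = Finset.univ := by
      rw [← Finset.compl_eq_empty_iff]
      exact Finset.card_eq_zero.1 (Nat.le_zero.1 hS)
    subst hU
    exact base hφ hEff hIR hinj h1
  | succ t ih =>
    intro S hS
    by_cases hU : S = Finset.univ
    · subst hU
      exact base hφ hEff hIR hinj h1
    · have hex : ∃ j0, j0 ∉ S := by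
        by_contra h
        push_neg at h
        exact hU (Finset.eq_univ_iff_forall.2 h)
      obtain ⟨j0, hj0⟩ := hex
      set A := φ (PSprof P i S) with hAdef
      have hAb : Bistochastic A := hφ (PSprof P i S)
      have hne : ∀ j : ZMod k, i (j + 1) ≠ i j := cycle_ne hinj h1
      have step1 : ∀ j ∉ S, A (i j) (i (j + 1)) = 1 := by
        intro j hj
        have hcard : (insert j S)ᶜ.card ≤ t := by
          rw [Finset.compl_insert, Finset.card_erase_of_mem (Finset.mem_compl.2 hj)]
          omega
        have hIH := ih (insert j S) hcard j
        have hsp := hSP (PSprof P i S) (i j) (Qpref i j)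
        rw [PSprof_top hinj hcyc S j, PSprof_insert hinj S j, hIH] at hsp
        exact le_antisymm (bi_entry_le hAb _ _) hsp
      have step2 : ∀ m : ℕ,
          A (i (j0 + (m : ZMod k))) (i (j0 + (m : ZMod k) + 1)) = 1 := by
        intro m
        induction m with
        | zero => simpa using step1 j0 hj0
        | succ m ihm =>
          have hc1 : ((m + 1 : ℕ) : ZMod k) = (m : ZMod k) + 1 := by push_cast; ring
          rw [hc1, ← add_assoc]
          set j' := j0 + (m : ZMod k) + 1 with hj'
          by_cases hjS : j' ∈ S
          · have hrowsne : i (j0 + (m : ZMod k)) ≠ i j' := by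
              intro h
              apply h1
              have h2 := hinj h
              rw [hj'] at h2
              linear_combination -h2
            have hcolp : A (i (j0 + (m : ZMod k))) (i j') + A (i j') (i j') ≤ 1 := by
              have h := bi_col_le hAb (i j') {i (j0 + (m : ZMod k)), i j'}
              rwa [sum_pair hrowsne] at h
            have hdiag0 : 0 ≤ A (i j') (i j') := hAb.1 _ _
            have hIRj : 1 ≤ A (i j') (i (j' + 1)) + A (i j') (i j') := by
              have h := hIR (PSprof P i S) (i j')
              rw [PSprof_in hinj hjS] at h
              exact sd_delta_pair (Ne.symm (hne j')) h
            have := bi_entry_le hAb (i j') (i (j' + 1))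
            linarith
          · exact step1 j' hjS
      intro j
      have hv : ((j - j0).val : ZMod k) = j - j0 := ZMod.natCast_rightInverse _
      have he : j0 + ((j - j0).val : ZMod k) = j := by rw [hv]; ring
      rw [← he]
      exact step2 (j - j0).val

end Main

theorem stmt9 {n k : ℕ} [NeZero n] [NeZero k]
    (φ : (Fin n → Pref n) → Matrix (Fin n) (Fin n) ℝ)
    (hφ : ∀ P, Bistochastic (φ P))
    (hEff : ∀ P, SDEffAt P (φ P)) (hIR : ∀ P, SDIRAt P (φ P))
    (hSP : ∀ (P : Fin n → Pref n) (a : Fin n) (P' : Pref n),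
      φ (Function.update P a P') a (topOf (P a)) ≤ φ P a (topOf (P a)))
    (P : Fin n → Pref n) (i : ZMod k → Fin n) (hinj : Function.Injective i)
    (hcyc : ∀ j : ZMod k, topOf (P (i j)) = i (j + 1)) :
    ∀ j : ZMod k, φ P (i j) (i (j + 1)) = 1 := by
  intro j
  by_cases h1 : (1 : ZMod k) = 0
  · have hj1 : j + 1 = j := by rw [h1, add_zero]
    rw [hj1]
    have hd := hIR P (i j) (i j)
    have htop : topOf (P (i j)) = i j := by rw [hcyc j, hj1]
    have hUC := UC_top (P (i j))
    rw [htop] at hUC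
    rw [hUC, Finset.sum_singleton, Finset.sum_singleton] at hd
    simp only [delta, if_pos rfl] at hd
    exact le_antisymm (bi_entry_le (hφ P) _ _) hd
  · have hkey := key hφ hEff hIR hSP hinj hcyc h1
      ((∅ᶜ : Finset (ZMod k)).card) ∅ le_rfl j
    rwa [PSprof_empty] at hkey
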